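/- arXiv:2105.12062 — 7 statements merged into one kernel-verified Lean document; each statement's English description precedes it below -/
import Mathlib

section
/- Under the setting of M-OGM-G with ∑_{k=0}^{N}(δ_{k+1}/2)‖∇f(x_k)‖² ≤ 12LΔ₀/((N+2)(N+3)) and δ_{k+1} = 12/((N-k+1)(N-k+2)(N-k+3)), the minimum gradient satisfies min_{0≤k≤N} ‖∇f(x_k)‖² ≤ 8LΔ₀/((N+2)(N+3) - 2). -/
lemma weight_sum (N : ℕ) :
    ∑ k ∈ Finset.range (N + 1),
      12 / (((N : ℝ) - k + 1) * ((N : ℝ) - k + 2) * ((N : ℝ) - k + 3)) / 2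
    = 3 / 2 - 3 / (((N : ℝ) + 2) * ((N : ℝ) + 3)) := by
  induction N with
  | zero => norm_num
  | succ n ih =>
    rw [Finset.sum_range_succ']
    have h1 : ∑ i ∈ Finset.range (n + 1),
        12 / ((((n : ℝ) + 1) - ((i : ℕ) + 1 : ℕ) + 1) * (((n : ℝ) + 1) - ((i : ℕ) + 1 : ℕ) + 2)
          * (((n : ℝ) + 1) - ((i : ℕ) + 1 : ℕ) + 3)) / 2
        = ∑ k ∈ Finset.range (n + 1),
        12 / (((n : ℝ) - k + 1) * ((n : ℝ) - k + 2) * ((n : ℝ) - k + 3)) / 2 := by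
      refine Finset.sum_congr rfl fun i _ => ?_
      push_cast
      ring_nf
    push_cast at h1 ⊢
    rw [h1, ih]
    have h2 : (0:ℝ) < (n : ℝ) + 2 := by positivity
    have h3 : (0:ℝ) < (n : ℝ) + 3 := by positivity
    have h4 : (0:ℝ) < (n : ℝ) + 4 := by positivity
    simp only [sub_zero]
    field_simp
    ring

theorem stmt_9 {d : ℕ} (L Δ : ℝ) (hL : 0 < L) (N : ℕ)
    (f : EuclideanSpace ℝ (Fin d) → ℝ) (x : ℕ → EuclideanSpace ℝ (Fin d))
    (hsum : ∑ k ∈ Finset.range (N + 1),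
        12 / (((N : ℝ) - k + 1) * ((N : ℝ) - k + 2) * ((N : ℝ) - k + 3)) / 2 *
          ‖gradient f (x k)‖ ^ 2
        ≤ 12 * L * Δ / (((N : ℝ) + 2) * ((N : ℝ) + 3))) :
    (Finset.range (N + 1)).inf' (Finset.nonempty_range_iff.mpr (Nat.succ_ne_zero N))
        (fun k => ‖gradient f (x k)‖ ^ 2)
      ≤ 8 * L * Δ / (((N : ℝ) + 2) * ((N : ℝ) + 3) - 2) := by
  set g : ℕ → ℝ := fun k => ‖gradient f (x k)‖ ^ 2 with hg
  set m : ℝ := (Finset.range (N + 1)).inf'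
      (Finset.nonempty_range_iff.mpr (Nat.succ_ne_zero N)) g with hm
  set P : ℝ := ((N : ℝ) + 2) * ((N : ℝ) + 3) with hP
  have hPpos : 0 < P := by positivity
  have hP6 : (6 : ℝ) ≤ P := by
    have : (0 : ℝ) ≤ (N : ℝ) := Nat.cast_nonneg N
    nlinarith
  have hmle : ∀ k ∈ Finset.range (N + 1), m ≤ g k := fun k hk =>
    Finset.inf'_le g hk
  have hwnn : ∀ k ∈ Finset.range (N + 1),
      0 ≤ 12 / (((N : ℝ) - k + 1) * ((N : ℝ) - k + 2) * ((N : ℝ) - k + 3)) / 2 := by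
    intro k hk
    have hkN : (k : ℝ) ≤ N := Nat.cast_le.mpr (Nat.lt_succ_iff.mp (Finset.mem_range.mp hk))
    have h1 : 0 < ((N : ℝ) - k + 1) * ((N : ℝ) - k + 2) * ((N : ℝ) - k + 3) := by
      apply mul_pos (mul_pos _ _) <;> linarith
    positivity
  have key : m * (3 / 2 - 3 / P) ≤ 12 * L * Δ / P := by
    calc m * (3 / 2 - 3 / P)
        = ∑ k ∈ Finset.range (N + 1),
            m * (12 / (((N : ℝ) - k + 1) * ((N : ℝ) - k + 2) * ((N : ℝ) - k + 3)) / 2) := by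
          rw [← Finset.mul_sum, weight_sum]
      _ ≤ ∑ k ∈ Finset.range (N + 1),
            12 / (((N : ℝ) - k + 1) * ((N : ℝ) - k + 2) * ((N : ℝ) - k + 3)) / 2 * g k := by
          refine Finset.sum_le_sum fun k hk => ?_
          rw [mul_comm]
          exact mul_le_mul_of_nonneg_left (hmle k hk) (hwnn k hk)
      _ ≤ 12 * L * Δ / P := hsum
  have hmain : m * (P - 2) ≤ 8 * L * Δ := by
    have h1 := mul_le_mul_of_nonneg_right key (le_of_lt hPpos)
    have h2 : 12 * L * Δ / P * P = 12 * L * Δ := div_mul_cancel₀ _ (ne_of_gt hPpos)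
    have h3 : m * (3 / 2 - 3 / P) * P = 3 / 2 * (m * (P - 2)) := by
      field_simp
    rw [h2, h3] at h1
    linarith
  have hP2 : 0 < P - 2 := by linarith
  exact (le_div_iff₀ hP2).mpr hmain
end

section
/- Let f be convex with f^δ(x) = f(x) + (δ/2)‖x - x₀‖² for δ > 0, and let x⋆_δ be the unique minimizer of f^δ. Then for every minimizer x⋆ of f, ‖x₀ - x⋆_δ‖² + ‖x⋆ - x⋆_δ‖² ≤ ‖x₀ - x⋆‖²; in particular ‖x₀ - x⋆_δ‖ ≤ ‖x₀ - x⋆‖. -/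
open Filter Topology

/-- The function `x ↦ f x + δ/2 * ‖x - x₀‖²` is `δ`-strongly convex when `f` is convex. -/
lemma aux_strong_convex {d : ℕ} (δ : ℝ)
    (f : EuclideanSpace ℝ (Fin d) → ℝ) (x₀ : EuclideanSpace ℝ (Fin d))
    (hconv : ConvexOn ℝ Set.univ f)
    (g : EuclideanSpace ℝ (Fin d) → ℝ)
    (hg : ∀ x, g x = f x + δ / 2 * ‖x - x₀‖ ^ 2) :
    StrongConvexOn (Set.univ : Set (EuclideanSpace ℝ (Fin d))) δ g := by
  rw [strongConvexOn_iff_convex]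
  have haff : ConvexOn ℝ (Set.univ : Set (EuclideanSpace ℝ (Fin d)))
      (fun x => -(δ * (inner ℝ x x₀ : ℝ)) + δ / 2 * ‖x₀‖ ^ 2) := by
    refine ⟨convex_univ, ?_⟩
    intro x _ y _ a b ha hb hab
    simp only [inner_add_left, real_inner_smul_left, smul_eq_mul]
    have hb' : b = 1 - a := by linarith
    subst hb'
    apply le_of_eq
    ring
  have : (fun x => g x - δ / 2 * ‖x‖ ^ 2)
      = fun x => f x + (-(δ * (inner ℝ x x₀ : ℝ)) + δ / 2 * ‖x₀‖ ^ 2) := by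
    funext x
    rw [hg x, norm_sub_sq_real]
    ring
  rw [this]
  exact hconv.add haff

theorem stmt_12 {d : ℕ} (δ : ℝ) (hδ : 0 < δ)
    (f : EuclideanSpace ℝ (Fin d) → ℝ) (x₀ xd : EuclideanSpace ℝ (Fin d))
    (hdiff : Differentiable ℝ f) (hconv : ConvexOn ℝ Set.univ f)
    (g : EuclideanSpace ℝ (Fin d) → ℝ)
    (hg : ∀ x, g x = f x + δ / 2 * ‖x - x₀‖ ^ 2)
    (hxd : ∀ y, g xd ≤ g y) :
    ∀ xs : EuclideanSpace ℝ (Fin d), (∀ y, f xs ≤ f y) →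
      ‖x₀ - xd‖ ^ 2 + ‖xs - xd‖ ^ 2 ≤ ‖x₀ - xs‖ ^ 2 ∧ ‖x₀ - xd‖ ≤ ‖x₀ - xs‖ := by
  intro xs hxs
  have hsc := aux_strong_convex δ f x₀ hconv g hg
  -- key: g xd + δ/2 * ‖xd - xs‖ ^ 2 ≤ g xs
  have key : g xd + δ / 2 * ‖xd - xs‖ ^ 2 ≤ g xs := by
    have step : ∀ t : ℝ, t ∈ Set.Ioo (0 : ℝ) 1 →
        g xd + δ / 2 * ‖xd - xs‖ ^ 2 ≤ g xs + δ / 2 * t * ‖xd - xs‖ ^ 2 := by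
      intro t ht
      obtain ⟨ht0, ht1⟩ := ht
      have h1 : g xd ≤ g ((1 - t) • xd + t • xs) := hxd _
      have h2 : g ((1 - t) • xd + t • xs)
          ≤ (1 - t) * g xd + t * g xs - (1 - t) * t * (δ / 2 * ‖xd - xs‖ ^ 2) :=
        hsc.2 (Set.mem_univ xd) (Set.mem_univ xs) (by linarith) ht0.le (by ring)
      have h3 : t * (g xd + δ / 2 * (1 - t) * ‖xd - xs‖ ^ 2) ≤ t * g xs := by nlinarith
      have h4 : g xd + δ / 2 * (1 - t) * ‖xd - xs‖ ^ 2 ≤ g xs :=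
        le_of_mul_le_mul_left (by linarith [h3]) ht0
      nlinarith
    have htend : Tendsto (fun t : ℝ => g xs + δ / 2 * t * ‖xd - xs‖ ^ 2) (𝓝[>] (0:ℝ))
        (𝓝 (g xs + δ / 2 * 0 * ‖xd - xs‖ ^ 2)) := by
      apply Tendsto.mono_left _ nhdsWithin_le_nhds
      exact (Continuous.tendsto (by continuity) 0)
    have hev : ∀ᶠ t in 𝓝[>] (0:ℝ), g xd + δ / 2 * ‖xd - xs‖ ^ 2 ≤ g xs + δ / 2 * t * ‖xd - xs‖ ^ 2 := by
      filter_upwards [Ioo_mem_nhdsGT_of_mem (by norm_num : (0:ℝ) ∈ Set.Ico (0:ℝ) 1)]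
        with t ht using step t ht
    have := ge_of_tendsto htend hev
    simpa using this
  -- from key, derive the norm inequality
  have hfs : f xs ≤ f xd := hxs xd
  rw [hg xd, hg xs] at key
  have hsq : ‖xd - x₀‖ ^ 2 + ‖xd - xs‖ ^ 2 ≤ ‖xs - x₀‖ ^ 2 := by nlinarith
  have e1 : ‖x₀ - xd‖ = ‖xd - x₀‖ := norm_sub_rev _ _
  have e2 : ‖xs - xd‖ = ‖xd - xs‖ := norm_sub_rev _ _
  have e3 : ‖x₀ - xs‖ = ‖xs - x₀‖ := norm_sub_rev _ _
  have hmain : ‖x₀ - xd‖ ^ 2 + ‖xs - xd‖ ^ 2 ≤ ‖x₀ - xs‖ ^ 2 := by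
    rw [e1, e2, e3]; exact hsq
  refine ⟨hmain, ?_⟩
  have h1 : ‖x₀ - xd‖ ^ 2 ≤ ‖x₀ - xs‖ ^ 2 := by nlinarith [sq_nonneg ‖xs - xd‖]
  exact (pow_le_pow_iff_left₀ (norm_nonneg _) (norm_nonneg _) two_ne_zero).mp h1
end

section
/- Let f be convex with minimizer x⋆, δ > 0, f^δ(x) = f(x) + (δ/2)‖x - x₀‖², and x⋆_δ the minimizer of f^δ. Then ‖x₀ - x⋆_δ‖² ≤ (2/δ)(f(x₀) - f(x⋆)). -/
theorem stmt_13 {d : ℕ} (δ : ℝ) (hδ : 0 < δ)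
    (f : EuclideanSpace ℝ (Fin d) → ℝ) (x₀ xs xd : EuclideanSpace ℝ (Fin d))
    (hdiff : Differentiable ℝ f) (hconv : ConvexOn ℝ Set.univ f)
    (hxs : ∀ y, f xs ≤ f y)
    (g : EuclideanSpace ℝ (Fin d) → ℝ)
    (hg : ∀ x, g x = f x + δ / 2 * ‖x - x₀‖ ^ 2)
    (hxd : ∀ y, g xd ≤ g y) :
    ‖x₀ - xd‖ ^ 2 ≤ 2 / δ * (f x₀ - f xs) := by
  have h1 := hxd x₀
  rw [hg, hg] at h1
  simp at h1
  have h2 := hxs xd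
  have h3 : ‖x₀ - xd‖ = ‖xd - x₀‖ := norm_sub_rev _ _
  rw [h3]
  rw [div_mul_eq_mul_div, le_div_iff₀ hδ]
  nlinarith
end

section
/- Shifting lemma: Let 𝒢, z⁻, y, x⋆ ∈ ℝ^d, α, δ > 0, and let z⁺ = argmin_x {⟨𝒢, x⟩ + (α/2)‖x - z⁻‖² + (δ/2)‖x - y‖²}. If ℋ = 𝒢 - δ(y - x⋆), then ⟨ℋ, z⁻ - x⋆⟩ = (α/2)(‖z⁻ - x⋆‖² - (1 + δ/α)²‖z⁺ - x⋆‖²) + (1/(2α))‖ℋ‖². -/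
theorem stmt_14 {d : ℕ} (α δ : ℝ) (hα : 0 < α) (hδ : 0 < δ)
    (G H zm zp y xs : EuclideanSpace ℝ (Fin d))
    (hopt : G + α • (zp - zm) + δ • (zp - y) = 0)
    (hH : H = G - δ • (y - xs)) :
    (inner ℝ (H) (zm - xs) : ℝ) = α / 2 * (‖zm - xs‖ ^ 2 - (1 + δ / α) ^ 2 * ‖zp - xs‖ ^ 2)
      + 1 / (2 * α) * ‖H‖ ^ 2 := by
  have hHab : H = α • (zm - xs) - (α + δ) • (zp - xs) := by
    rw [hH]; linear_combination (norm := module) hopt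
  rw [hHab, ← real_inner_self_eq_norm_sq, ← real_inner_self_eq_norm_sq,
    ← real_inner_self_eq_norm_sq]
  simp only [inner_sub_left, inner_sub_right, real_inner_smul_left, real_inner_smul_right]
  rw [real_inner_comm zm zp, real_inner_comm xs zm, real_inner_comm xs zp, real_inner_comm xs xs]
  field_simp
  ring
end

section
/- Fix n ≥ 1 and κ > 1, and consider the cubic s(x) = x³ - (2n-3)x² - (2nκ + n - 3)x - nκ + 1. Then s has a unique positive root, and this root satisfies x ≤ 2n + 2√(nκ). -/
theorem stmt_15 (n : ℕ) (hn : 1 ≤ n) (κ : ℝ) (hκ : 1 < κ) :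
    (∃! x : ℝ, 0 < x ∧
        x ^ 3 - (2 * (n : ℝ) - 3) * x ^ 2 - (2 * n * κ + n - 3) * x - n * κ + 1 = 0) ∧
      ∀ x : ℝ, 0 < x →
        x ^ 3 - (2 * (n : ℝ) - 3) * x ^ 2 - (2 * n * κ + n - 3) * x - n * κ + 1 = 0 →
        x ≤ 2 * n + 2 * Real.sqrt (n * κ) := by
  have hn1 : (1:ℝ) ≤ (n:ℝ) := by exact_mod_cast hn
  have hb : 0 < 2*(n:ℝ)*κ + (n:ℝ) - 3 := by nlinarith
  have hc : 0 < (n:ℝ)*κ - 1 := by nlinarith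
  set f : ℝ → ℝ := fun x => x ^ 3 - (2 * (n : ℝ) - 3) * x ^ 2 - (2 * n * κ + n - 3) * x - n * κ + 1 with hf
  have key : ∀ u v : ℝ, 0 < u → u < v → v^2 * f u < u^2 * f v := by
    intro u v hu huv
    have hv : 0 < v := hu.trans huv
    have hsum : 0 < u^2*v^2 + (2*(n:ℝ)*κ+(n:ℝ)-3)*(u*v) + ((n:ℝ)*κ-1)*(u+v) :=
      add_pos (add_pos (by positivity) (mul_pos hb (mul_pos hu hv))) (mul_pos hc (add_pos hu hv))
    have h1 := mul_pos (sub_pos.mpr huv) hsum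
    simp only [hf]
    nlinarith [h1]
  set r := Real.sqrt ((n:ℝ)*κ) with hrdef
  have hr2 : r^2 = (n:ℝ)*κ := Real.sq_sqrt (by positivity)
  have hr1 : 1 ≤ r := by
    rw [hrdef]
    rw [show (1:ℝ) = Real.sqrt 1 by simp]
    exact Real.sqrt_le_sqrt (by nlinarith)
  set M : ℝ := 2*(n:ℝ) + 2*r with hM
  have hM0 : 0 < M := by rw [hM]; linarith
  have hfM : 0 < f M := by
    simp only [hf, hM]
    have hnpos : (0:ℝ) < (n:ℝ) := lt_of_lt_of_le one_pos hn1
    have hrpos : (0:ℝ) < r := lt_of_lt_of_le one_pos hr1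
    nlinarith [hr2, hr1, hn1, mul_pos hnpos hrpos, mul_pos (mul_pos hnpos hnpos) hrpos, mul_pos (mul_pos hnpos hrpos) hrpos, mul_pos (mul_pos hrpos hrpos) hrpos]
  have hf0 : f 0 < 0 := by simp only [hf]; nlinarith
  have hcont : ContinuousOn f (Set.Icc 0 M) := by
    apply Continuous.continuousOn; rw [hf]; continuity
  obtain ⟨x, hxmem, hfx⟩ := intermediate_value_Ioo hM0.le hcont ⟨hf0, hfM⟩
  refine ⟨⟨x, ⟨hxmem.1, hfx⟩, ?_⟩, ?_⟩
  · intro y ⟨hy, hfy⟩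
    by_contra hne
    rcases lt_or_gt_of_ne hne with h | h
    · have := key y x hy h
      rw [show f y = 0 from hfy, show f x = 0 from hfx] at this
      simp at this
    · have := key x y hxmem.1 h
      rw [show f y = 0 from hfy, show f x = 0 from hfx] at this
      simp at this
  · intro y hy hfy
    by_contra h
    push_neg at h
    have := key M y hM0 h
    rw [show f y = 0 from hfy] at this
    nlinarith [sq_nonneg y, hfM, mul_pos hM0 hM0]
end

section
/- Let p_k = max{6/(k+8), 1/n} and τ_k = 3/(p_k(k+8)) for k ≥ 0, with integer n ≥ 1. Then for every k ≥ 0, ((1 - τ_{k+1}p_{k+1})(1 - τ_{k+1}))/(τ_{k+1}² p_{k+1}) ≤ (1 - τ_k)/(τ_k² p_k). -/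
private lemma aux1 (N m : ℝ) (hN : 0 < N) (hm : 0 < m) :
    (1 - 3 / (1 / N * m) * (1 / N)) * (1 - 3 / (1 / N * m)) / ((3 / (1 / N * m)) ^ 2 * (1 / N))
      = (m - 3) * (m - 3 * N) / (9 * N) := by
  field_simp
  ring

private lemma aux2 (N m : ℝ) (hN : 0 < N) (hm : 0 < m) :
    (1 - 3 / (1 / N * m)) / ((3 / (1 / N * m)) ^ 2 * (1 / N)) = m * (m - 3 * N) / (9 * N) := by
  field_simp
  ring

private lemma aux3 (m : ℝ) (hm : 0 < m) :
    (1 - 3 / (6 / m * m)) / ((3 / (6 / m * m)) ^ 2 * (6 / m)) = m / 3 := by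
  have h : 6 / m * m = 6 := by field_simp
  rw [h]
  norm_num
  field_simp
  ring

private lemma aux4 (m : ℝ) (hm : 0 < m) :
    (1 - 3 / (6 / m * m) * (6 / m)) * (1 - 3 / (6 / m * m)) / ((3 / (6 / m * m)) ^ 2 * (6 / m))
      = (m - 3) / 3 := by
  have h : 6 / m * m = 6 := by field_simp
  rw [h]
  norm_num
  field_simp
  ring

theorem stmt_17 (n : ℕ) (hn : 1 ≤ n) (p τ : ℕ → ℝ)
    (hp : ∀ k, p k = max (6 / ((k : ℝ) + 8)) (1 / (n : ℝ)))
    (hτ : ∀ k, τ k = 3 / (p k * ((k : ℝ) + 8))) :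
    ∀ k, (1 - τ (k + 1) * p (k + 1)) * (1 - τ (k + 1)) / (τ (k + 1) ^ 2 * p (k + 1)) ≤
      (1 - τ k) / (τ k ^ 2 * p k) := by
  intro k
  have hN : (1:ℝ) ≤ (n:ℝ) := by exact_mod_cast hn
  have hN0 : (0:ℝ) < (n:ℝ) := by linarith
  have hk0 : (0:ℝ) ≤ (k:ℝ) := Nat.cast_nonneg k
  have hm0 : (0:ℝ) < (k:ℝ) + 8 := by linarith
  have hm1 : (0:ℝ) < (k:ℝ) + 1 + 8 := by linarith
  have hc : ((k + 1 : ℕ) : ℝ) = (k:ℝ) + 1 := by push_cast; ring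
  rw [hτ k, hτ (k+1), hp k, hp (k+1), hc]
  rcases le_or_gt (6 * (n:ℝ)) ((k:ℝ) + 8) with hB | hlt
  · -- both p = 1/n
    have e1 : max (6 / ((k:ℝ) + 8)) (1 / (n:ℝ)) = 1 / (n:ℝ) := by
      apply max_eq_right
      rw [div_le_div_iff₀ hm0 hN0]; nlinarith
    have e2 : max (6 / ((k:ℝ) + 1 + 8)) (1 / (n:ℝ)) = 1 / (n:ℝ) := by
      apply max_eq_right
      rw [div_le_div_iff₀ hm1 hN0]; nlinarith
    rw [e1, e2, aux1 _ _ hN0 hm1, aux2 _ _ hN0 hm0,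
      div_le_div_iff₀ (by positivity) (by positivity)]
    nlinarith [mul_nonneg hN0.le (sub_nonneg.2 hB)]
  · rcases le_or_gt (6 * (n:ℝ)) ((k:ℝ) + 1 + 8) with hC | hA
    · -- p k = 6/(k+8), p (k+1) = 1/n
      have e1 : max (6 / ((k:ℝ) + 8)) (1 / (n:ℝ)) = 6 / ((k:ℝ) + 8) := by
        apply max_eq_left
        rw [div_le_div_iff₀ hN0 hm0]; nlinarith
      have e2 : max (6 / ((k:ℝ) + 1 + 8)) (1 / (n:ℝ)) = 1 / (n:ℝ) := by
        apply max_eq_right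
        rw [div_le_div_iff₀ hm1 hN0]; nlinarith
      rw [e1, e2, aux1 _ _ hN0 hm1, aux3 _ hm0,
        div_le_div_iff₀ (by positivity) (by positivity)]
      nlinarith [mul_nonneg (sub_nonneg.2 hC) hm0.le, mul_pos hm0 hm1]
    · -- both p = 6/(·+8)
      have e1 : max (6 / ((k:ℝ) + 8)) (1 / (n:ℝ)) = 6 / ((k:ℝ) + 8) := by
        apply max_eq_left
        rw [div_le_div_iff₀ hN0 hm0]; nlinarith
      have e2 : max (6 / ((k:ℝ) + 1 + 8)) (1 / (n:ℝ)) = 6 / ((k:ℝ) + 1 + 8) := by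
        apply max_eq_left
        rw [div_le_div_iff₀ hN0 hm1]; nlinarith
      rw [e1, e2, aux4 _ hm1, aux3 _ hm0]
      linarith
end

section
/- Let p_k ≡ 1/n and τ_k = 3/(k/n + 6) for integer n ≥ 1 and k ≥ 0. Then for every k ≥ 0, ((1 - τ_{k+1}p_{k+1})(1 - τ_{k+1}))/(τ_{k+1}² p_{k+1}) ≤ (1 - τ_k)/(τ_k² p_k). -/
theorem stmt_18 (n : ℕ) (hn : 1 ≤ n) (p τ : ℕ → ℝ)
    (hp : ∀ k, p k = 1 / (n : ℝ))
    (hτ : ∀ k, τ k = 3 / ((k : ℝ) / n + 6)) :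
    ∀ k, (1 - τ (k + 1) * p (k + 1)) * (1 - τ (k + 1)) / (τ (k + 1) ^ 2 * p (k + 1)) ≤
      (1 - τ k) / (τ k ^ 2 * p k) := by
  intro k
  have hN : (1:ℝ) ≤ n := by exact_mod_cast hn
  have hN0 : (0:ℝ) < n := by linarith
  have hx : (0:ℝ) ≤ k := Nat.cast_nonneg k
  set x : ℝ := (k : ℝ)
  have hd1 : x / n + 6 ≠ 0 := by positivity
  have hd2 : ((k:ℕ)+1 : ℝ) / n + 6 ≠ 0 := by positivity
  have hL : (1 - τ (k + 1) * p (k + 1)) * (1 - τ (k + 1)) / (τ (k + 1) ^ 2 * p (k + 1))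
      = (x + 6*n - 2) * (x + 1 + 3*n) / (9*n) := by
    rw [hp, hτ]
    push_cast
    field_simp
    ring
  have hR : (1 - τ k) / (τ k ^ 2 * p k) = (x + 3*n) * (x + 6*n) / (9*n) := by
    rw [hp, hτ]
    field_simp
    ring
  rw [hL, hR]
  rw [div_le_div_iff₀ (by positivity) (by positivity)]
  nlinarith [mul_nonneg hx hN0.le]
end
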